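/- Let 2 ≤ p ≤ ∞ and 2 ≤ q ≤ ∞. Then M(H_p, ℓ_q) = ℓ_∞, i.e., a sequence λ is a multiplier from H_p into ℓ_q if and only if λ is bounded. -/

import Mathlib

open MeasureTheory Complex Filter Topology Set
open scoped ENNReal

noncomputable section

/-- The `n`-th Taylor coefficient of `f` at `0`. -/
def taylorCoeff (f : ℂ → ℂ) (n : ℕ) : ℂ := iteratedDeriv n f 0 / n.factorial

/-- The `p`-integral mean of `f` on the circle of radius `r` (finite `p`). -/
def circleMean (p : ℝ) (f : ℂ → ℂ) (r : ℝ) : ℝ :=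
  ((1 / (2 * Real.pi)) * ∫ t in (0:ℝ)..(2 * Real.pi),
      ‖f ((r : ℂ) * Complex.exp (t * Complex.I))‖ ^ p) ^ (1 / p)

/-- The sup of `|f|` on the circle of radius `r`. -/
def circleSup (f : ℂ → ℂ) (r : ℝ) : ℝ :=
  ⨆ t : ℝ, ‖f ((r : ℂ) * Complex.exp (t * Complex.I))‖

def hardyMean (p : ℝ≥0∞) (f : ℂ → ℂ) (r : ℝ) : ℝ :=
  if p = ⊤ then circleSup f r else circleMean p.toReal f r

/-- Membership in the Hardy space `H_p` of the unit disk. -/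
def MemHardy (p : ℝ≥0∞) (f : ℂ → ℂ) : Prop :=
  AnalyticOn ℂ f (Metric.ball (0:ℂ) 1) ∧
    BddAbove ((fun r => hardyMean p f r) '' Set.Ico (0:ℝ) 1)

/-- The `H_p` norm: the sup of the `p`-means over radii `0 ≤ r < 1`. -/
def hardyNorm (p : ℝ≥0∞) (f : ℂ → ℂ) : ℝ :=
  sSup ((fun r => hardyMean p f r) '' Set.Ico (0:ℝ) 1)

/-- The `ℓ_q` norm of a sequence. -/
def lqNorm (q : ℝ≥0∞) (x : ℕ → ℂ) : ℝ :=
  if q = ⊤ then ⨆ n, ‖x n‖ else (∑' n, ‖x n‖ ^ q.toReal) ^ (1 / q.toReal)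

/-- Coordinatewise multiplication of sequences. -/
def seqMul (l x : ℕ → ℂ) : ℕ → ℂ := fun n => l n * x n

/-- A Banach sequence lattice on ℤ₊: a Banach ideal space of sequences with monotone norm. -/
structure SeqLattice where
  Mem : (ℕ → ℂ) → Prop
  norm : (ℕ → ℂ) → ℝ
  zero_mem : Mem 0
  add_mem : ∀ x y, Mem x → Mem y → Mem (x + y)
  smul_mem : ∀ (c : ℂ) x, Mem x → Mem (c • x)
  norm_nonneg : ∀ x, 0 ≤ norm x
  norm_eq_zero_iff : ∀ x, Mem x → (norm x = 0 ↔ x = 0)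
  norm_add_le : ∀ x y, Mem x → Mem y → norm (x + y) ≤ norm x + norm y
  norm_smul : ∀ (c : ℂ) x, Mem x → norm (c • x) = ‖c‖ * norm x
  ideal : ∀ x y, Mem x → (∀ n, ‖y n‖ ≤ ‖x n‖) → Mem y ∧ norm y ≤ norm x
  complete : ∀ u : ℕ → (ℕ → ℂ), (∀ m, Mem (u m)) →
    (∀ ε : ℝ, 0 < ε → ∃ N, ∀ m ≥ N, ∀ n ≥ N, norm (u m - u n) ≤ ε) →
    ∃ x, Mem x ∧ Tendsto (fun m => norm (u m - x)) atTop (𝓝 0)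

/-- Order continuity: every nonnegative, pointwise nonincreasing sequence of elements of `E`
converging pointwise to `0` converges to `0` in the norm of `E`. -/
def OrderContinuous (E : SeqLattice) : Prop :=
  ∀ u : ℕ → ℕ → ℝ,
    (∀ m, E.Mem fun k => (u m k : ℂ)) →
    (∀ m k, 0 ≤ u m k) →
    (∀ k, Antitone fun m => u m k) →
    (∀ k, Tendsto (fun m => u m k) atTop (𝓝 0)) →
    Tendsto (fun m => E.norm fun k => (u m k : ℂ)) atTop (𝓝 0)

/-- A set of sequences is solid if it is an ideal. -/
def IsSolid (S : Set (ℕ → ℂ)) : Prop :=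
  ∀ x ∈ S, ∀ y : ℕ → ℂ, (∀ n, ‖y n‖ ≤ ‖x n‖) → y ∈ S

/-- The solid hull: the smallest solid set containing `A`. -/
def solidHull (A : Set (ℕ → ℂ)) : Set (ℕ → ℂ) := ⋂₀ {S | IsSolid S ∧ A ⊆ S}

/-- The set of multipliers from `F` into `E`. -/
def MultSet (F E : Set (ℕ → ℂ)) : Set (ℕ → ℂ) := {l | ∀ x ∈ F, seqMul l x ∈ E}

/-- A Banach space of analytic functions on the unit disk. -/
structure AnalBanach where
  Mem : (ℂ → ℂ) → Prop
  norm : (ℂ → ℂ) → ℝ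
  analytic : ∀ f, Mem f → AnalyticOn ℂ f (Metric.ball (0:ℂ) 1)
  zero_mem : Mem 0
  add_mem : ∀ f g, Mem f → Mem g → Mem (f + g)
  smul_mem : ∀ (c : ℂ) f, Mem f → Mem (c • f)
  norm_nonneg : ∀ f, 0 ≤ norm f
  norm_eq_zero_iff : ∀ f, Mem f → (norm f = 0 ↔ ∀ z ∈ Metric.ball (0:ℂ) 1, f z = 0)
  norm_add_le : ∀ f g, Mem f → Mem g → norm (f + g) ≤ norm f + norm g
  norm_smul : ∀ (c : ℂ) f, Mem f → norm (c • f) = ‖c‖ * norm f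
  complete : ∀ u : ℕ → (ℂ → ℂ), (∀ m, Mem (u m)) →
    (∀ ε : ℝ, 0 < ε → ∃ N, ∀ m ≥ N, ∀ n ≥ N, norm (u m - u n) ≤ ε) →
    ∃ f, Mem f ∧ Tendsto (fun m => norm (u m - f)) atTop (𝓝 0)

/-- The Taylor coefficient space `X̂` of a space of analytic functions. -/
def coeffSpace (X : AnalBanach) : Set (ℕ → ℂ) := {a | ∃ f, X.Mem f ∧ a = taylorCoeff f}

/-- `H_p ↪ X` continuously. -/
def EmbedHardyIn (p : ℝ≥0∞) (X : AnalBanach) : Prop :=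
  ∃ C : ℝ, 0 < C ∧ ∀ f, MemHardy p f → X.Mem f ∧ X.norm f ≤ C * hardyNorm p f

/-- `X ↪ H_p` continuously. -/
def EmbedInHardy (X : AnalBanach) (p : ℝ≥0∞) : Prop :=
  ∃ C : ℝ, 0 < C ∧ ∀ f, X.Mem f → MemHardy p f ∧ hardyNorm p f ≤ C * X.norm f

/-- Hausdorff measure of noncompactness of a set in a Banach sequence lattice. -/
def hmnc (E : SeqLattice) (A : Set (ℕ → ℂ)) : ℝ :=
  sInf {ε : ℝ | 0 < ε ∧ ∃ Z : Finset (ℕ → ℂ),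
    (∀ z ∈ Z, E.Mem z) ∧ ∀ x ∈ A, ∃ z ∈ Z, E.norm (x - z) ≤ ε}

/-- Hausdorff measure of noncompactness of a set of sequences in the `ℓ_q` metric. -/
def hmncLq (q : ℝ≥0∞) (A : Set (ℕ → ℂ)) : ℝ :=
  sInf {ε : ℝ | 0 < ε ∧ ∃ Z : Finset (ℕ → ℂ), ∀ x ∈ A, ∃ z ∈ Z, lqNorm q (x - z) ≤ ε}

/-- Relative compactness (total boundedness) of a set in a Banach sequence lattice. -/
def RelCompactIn (E : SeqLattice) (A : Set (ℕ → ℂ)) : Prop :=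
  ∀ ε : ℝ, 0 < ε → ∃ Z : Finset (ℕ → ℂ),
    (∀ z ∈ Z, E.Mem z) ∧ ∀ x ∈ A, ∃ z ∈ Z, E.norm (x - z) ≤ ε

/-- Relative compactness (total boundedness) of a set of sequences in `ℓ_q`. -/
def RelCompactInLq (q : ℝ≥0∞) (A : Set (ℕ → ℂ)) : Prop :=
  ∀ ε : ℝ, 0 < ε → ∃ Z : Finset (ℕ → ℂ), ∀ x ∈ A, ∃ z ∈ Z, lqNorm q (x - z) ≤ ε

/-- The closed unit ball of `H_p`. -/
def hardyBall (p : ℝ≥0∞) : Set (ℂ → ℂ) := {f | MemHardy p f ∧ hardyNorm p f ≤ 1}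

/-- The multiplier operator `M_λ : H_p → ℓ_q` is (bounded into `ℓ_q` and) compact. -/
def MulCompactHardyLq (p q : ℝ≥0∞) (l : ℕ → ℂ) : Prop :=
  (∀ f, MemHardy p f → Memℓp (seqMul l (taylorCoeff f)) q) ∧
  RelCompactInLq q ((fun f => seqMul l (taylorCoeff f)) '' hardyBall p)

/-- The multiplier operator `M_λ : X → E` maps `X` into `E` and is compact. -/
def MulCompactX (X : AnalBanach) (E : SeqLattice) (l : ℕ → ℂ) : Prop :=
  (∀ f, X.Mem f → E.Mem (seqMul l (taylorCoeff f))) ∧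
  RelCompactIn E ((fun f => seqMul l (taylorCoeff f)) '' {f | X.Mem f ∧ X.norm f ≤ 1})


lemma taylorCoeff_eq_coeff {f : ℂ → ℂ} {P : FormalMultilinearSeries ℂ ℂ ℂ} {r : ℝ≥0∞}
    (h : HasFPowerSeriesOnBall f P 0 r) (n : ℕ) : taylorCoeff f n = P.coeff n := by
  have h1 := h.factorial_smul (1 : ℂ) n
  unfold taylorCoeff
  rw [iteratedDeriv_eq_iteratedFDeriv]
  have : (iteratedFDeriv ℂ n f 0 fun _ => (1:ℂ)) = (n.factorial : ℂ) * P.coeff n := by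
    rw [← h1, FormalMultilinearSeries.coeff]
    simp [nsmul_eq_mul]
  rw [this]
  field_simp [Nat.factorial_ne_zero]

lemma orth (c : ℤ) : (∫ t in (0:ℝ)..(2*Real.pi), Complex.exp ((c:ℂ) * (t * I))) =
    if c = 0 then ((2*Real.pi : ℝ) : ℂ) else 0 := by
  rcases eq_or_ne c 0 with hc | hc
  · simp [hc, Complex.ofReal_mul]
  · rw [if_neg hc]
    have h1 : ∀ t : ℝ, (c:ℂ) * ((t:ℝ) * I) = ((c:ℂ) * I) * (t:ℝ) := fun t => by ring
    simp_rw [h1]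
    rw [integral_exp_mul_complex (by simp [hc, Complex.I_ne_zero])]
    have h2 : (c:ℂ) * I * ((2*Real.pi : ℝ) : ℂ) = (c:ℂ) * (2 * (Real.pi:ℂ) * I) := by
      push_cast; ring
    rw [h2, Complex.exp_int_mul_two_pi_mul_I]
    simp

lemma mem_ball_circle {r : ℝ} (h0 : 0 ≤ r) (h1 : r < 1) (t : ℝ) :
    (r:ℂ) * Complex.exp (t * I) ∈ Metric.ball (0:ℂ) 1 := by
  simp only [mem_ball_zero_iff, norm_mul, Complex.norm_exp_ofReal_mul_I,
    mul_one, Complex.norm_real, Real.norm_eq_abs, _root_.abs_of_nonneg h0]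
  exact h1

lemma circle_cont {f : ℂ → ℂ} (hf : ContinuousOn f (Metric.ball 0 1)) {r : ℝ}
    (h0 : 0 ≤ r) (h1 : r < 1) :
    Continuous fun t : ℝ => f ((r:ℂ) * Complex.exp (t * I)) := by
  apply hf.comp_continuous
  · exact continuous_const.mul (Complex.continuous_exp.comp
      ((Complex.continuous_ofReal).mul continuous_const))
  · exact mem_ball_circle h0 h1

lemma memHardy_of_bounded {f : ℂ → ℂ} (hf : AnalyticOn ℂ f (Metric.ball 0 1))
    {C : ℝ} (hC : 0 ≤ C) (hb : ∀ z ∈ Metric.ball (0:ℂ) 1, ‖f z‖ ≤ C)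
    {p : ℝ≥0∞} (hp : p ≠ 0) : MemHardy p f := by
  refine ⟨hf, ⟨C, ?_⟩⟩
  rintro x ⟨r, hr, rfl⟩
  simp only [hardyMean]
  split_ifs with hT
  · exact ciSup_le fun t => hb _ (mem_ball_circle hr.1 hr.2 t)
  · have hpt : 0 < p.toReal := ENNReal.toReal_pos hp hT
    have hcont : Continuous fun t : ℝ => ‖f ((r:ℂ) * Complex.exp (t * I))‖ ^ p.toReal :=
      ((circle_cont hf.continuousOn hr.1 hr.2).norm).rpow_const fun t => Or.inr hpt.le
    have hmono : (∫ t in (0:ℝ)..(2*Real.pi),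
          ‖f ((r:ℂ) * Complex.exp (t * I))‖ ^ p.toReal)
        ≤ ∫ _t in (0:ℝ)..(2*Real.pi), C ^ p.toReal := by
      apply intervalIntegral.integral_mono_on (by positivity)
        (hcont.intervalIntegrable _ _) intervalIntegrable_const
      intro t _
      exact Real.rpow_le_rpow (norm_nonneg _) (hb _ (mem_ball_circle hr.1 hr.2 t)) hpt.le
    have hconst : (∫ _t in (0:ℝ)..(2*Real.pi), C ^ p.toReal) = (2*Real.pi) * C ^ p.toReal := by
      simp [mul_comm]
    rw [circleMean]
    have hnn : (0:ℝ) ≤ (1 / (2 * Real.pi)) * ∫ t in (0:ℝ)..(2*Real.pi),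
        ‖f ((r:ℂ) * Complex.exp (t * I))‖ ^ p.toReal := by
      have : (0:ℝ) ≤ ∫ t in (0:ℝ)..(2*Real.pi),
          ‖f ((r:ℂ) * Complex.exp (t * I))‖ ^ p.toReal :=
        intervalIntegral.integral_nonneg (by positivity)
          (fun t _ => Real.rpow_nonneg (norm_nonneg _) _)
      positivity
    have h3 : (1 / (2 * Real.pi)) * ((2*Real.pi) * C ^ p.toReal) = C ^ p.toReal := by
      have : Real.pi ≠ 0 := Real.pi_ne_zero
      field_simp
    have h2 : (1 / (2 * Real.pi)) * (∫ t in (0:ℝ)..(2*Real.pi),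
        ‖f ((r:ℂ) * Complex.exp (t * I))‖ ^ p.toReal) ≤ C ^ p.toReal := by
      rw [← h3]
      apply mul_le_mul_of_nonneg_left _ (by positivity)
      rw [← hconst]; exact hmono
    have h4 := Real.rpow_le_rpow hnn h2 (by positivity : (0:ℝ) ≤ 1/p.toReal)
    refine le_trans h4 ?_
    rw [← Real.rpow_mul hC, mul_one_div, div_self hpt.ne', Real.rpow_one]

lemma coeff_formula {f : ℂ → ℂ} (hf : DifferentiableOn ℂ f (Metric.ball 0 1))
    {r : ℝ} (h0 : 0 < r) (h1 : r < 1) (m : ℕ) :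
    (∫ t in (0:ℝ)..(2*Real.pi), f ((r:ℂ) * Complex.exp (t * I)) * Complex.exp (-(m:ℂ) * (t * I)))
      = ((2 * Real.pi : ℝ) : ℂ) * (taylorCoeff f m * (r:ℂ) ^ m) := by
  set R : NNReal := ⟨r, h0.le⟩ with hR
  have hball : HasFPowerSeriesOnBall f (cauchyPowerSeries f 0 r) 0 R := by
    have hd : DiffContOnCl ℂ f (Metric.ball (0:ℂ) r) := by
      constructor
      · exact hf.mono (Metric.ball_subset_ball h1.le)
      · exact hf.continuousOn.mono (by
          refine subset_trans Metric.closure_ball_subset_closedBall ?_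
          exact Metric.closedBall_subset_ball h1)
    have := hd.hasFPowerSeriesOnBall (R := R) (by exact_mod_cast h0)
    exact this
  have hc : taylorCoeff f m = (cauchyPowerSeries f 0 r).coeff m := taylorCoeff_eq_coeff hball m
  -- unfold the cauchy coefficient as an interval integral
  have happ : (cauchyPowerSeries f 0 r).coeff m
      = (2 * (Real.pi:ℂ) * I)⁻¹ • ∮ z in C(0, r), (1 / (z - 0)) ^ m • (z - 0)⁻¹ • f z := by
    rw [FormalMultilinearSeries.coeff]
    have := cauchyPowerSeries_apply f 0 r m 1
    simpa using this
  have hkey : ∀ θ : ℝ, deriv (circleMap 0 r) θ •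
        ((1 / (circleMap 0 r θ - 0)) ^ m • ((circleMap 0 r θ - 0)⁻¹ • f (circleMap 0 r θ)))
      = (I * ((r:ℂ) ^ m)⁻¹) * (f ((r:ℂ) * Complex.exp (θ * I)) * Complex.exp (-(m:ℂ) * (θ * I))) := by
    intro θ
    have hz : circleMap 0 r θ = (r:ℂ) * Complex.exp (θ * I) := by simp [circleMap]
    have hzne : (r:ℂ) * Complex.exp (θ * I) ≠ 0 :=
      mul_ne_zero (by exact_mod_cast h0.ne') (Complex.exp_ne_zero _)
    rw [deriv_circleMap, hz]
    simp only [smul_eq_mul, sub_zero, circleMap, zero_add]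
    have hem : (Complex.exp (θ * I)) ^ m ≠ 0 := pow_ne_zero _ (Complex.exp_ne_zero _)
    have hexp : Complex.exp (-(m:ℂ) * ((θ:ℝ) * I)) = ((Complex.exp ((θ:ℝ) * I)) ^ m)⁻¹ := by
      rw [← Complex.exp_nat_mul, ← Complex.exp_neg]
      ring_nf
    rw [hexp]
    have hrne : (r:ℂ) ≠ 0 := by exact_mod_cast h0.ne'
    have hene : Complex.exp ((θ:ℝ) * I) ≠ 0 := Complex.exp_ne_zero _
    simp only [one_div, mul_inv, inv_pow, mul_pow]
    field_simp [hrne, hene]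
  have hint : (∮ z in C(0, r), (1 / (z - 0)) ^ m • (z - 0)⁻¹ • f z)
      = (I * ((r:ℂ) ^ m)⁻¹) *
        ∫ t in (0:ℝ)..(2*Real.pi), f ((r:ℂ) * Complex.exp (t * I)) * Complex.exp (-(m:ℂ) * (t * I)) := by
    rw [circleIntegral]
    rw [show (fun θ : ℝ => deriv (circleMap 0 r) θ •
        ((1 / (circleMap 0 r θ - 0)) ^ m • ((circleMap 0 r θ - 0)⁻¹ • f (circleMap 0 r θ))))
      = fun θ : ℝ => (I * ((r:ℂ) ^ m)⁻¹) *
        (f ((r:ℂ) * Complex.exp (θ * I)) * Complex.exp (-(m:ℂ) * (θ * I))) from funext hkey]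
    rw [intervalIntegral.integral_const_mul]
  have heq : taylorCoeff f m = (2 * (Real.pi:ℂ) * I)⁻¹ * ((I * ((r:ℂ) ^ m)⁻¹) *
      ∫ t in (0:ℝ)..(2*Real.pi), f ((r:ℂ) * Complex.exp (t * I)) * Complex.exp (-(m:ℂ) * (t * I))) := by
    rw [hc, happ, hint, smul_eq_mul]
  have hrm : ((r:ℂ) ^ m) ≠ 0 := pow_ne_zero _ (by exact_mod_cast h0.ne')
  have hpi : (Real.pi : ℂ) ≠ 0 := by exact_mod_cast Real.pi_ne_zero
  rw [heq]
  push_cast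
  field_simp
  ring_nf
  apply intervalIntegral.integral_congr
  intro t _
  ring_nf

lemma bessel {f : ℂ → ℂ} (hf : AnalyticOn ℂ f (Metric.ball 0 1)) {r : ℝ}
    (h0 : 0 < r) (h1 : r < 1) (N : ℕ) :
    2 * Real.pi * ∑ m ∈ Finset.range N, Complex.normSq (taylorCoeff f m * (r:ℂ)^m)
      ≤ ∫ t in (0:ℝ)..(2*Real.pi), ‖f ((r:ℂ) * Complex.exp (t * I))‖^2 := by
  set c : ℕ → ℂ := fun m => taylorCoeff f m * (r:ℂ)^m with hc
  set F : ℝ → ℂ := fun t => f ((r:ℂ) * Complex.exp (t * I)) with hF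
  set g : ℝ → ℂ := fun t => ∑ m ∈ Finset.range N, c m * Complex.exp ((m:ℂ) * (t * I)) with hg
  set S : ℝ := ∑ m ∈ Finset.range N, Complex.normSq (c m) with hS
  have hFc : Continuous F := circle_cont hf.continuousOn h0.le h1
  have hec : ∀ z : ℂ, Continuous fun t : ℝ => Complex.exp (z * (t * I)) := fun z =>
    Complex.continuous_exp.comp (continuous_const.mul ((Complex.continuous_ofReal).mul
      continuous_const))
  have hgc : Continuous g := continuous_finset_sum _ fun m _ => continuous_const.mul (hec _)
  have hconjg : ∀ t : ℝ, (starRingEnd ℂ) (g t)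
      = ∑ m ∈ Finset.range N, (starRingEnd ℂ) (c m) * Complex.exp (-(m:ℂ) * (t * I)) := by
    intro t
    rw [map_sum]
    refine Finset.sum_congr rfl fun m _ => ?_
    rw [map_mul, ← Complex.exp_conj]
    congr 1
    simp [map_mul, Complex.conj_I, Complex.conj_ofReal]
  have hgcc : Continuous fun t => (starRingEnd ℂ) (g t) := Complex.continuous_conj.comp hgc
  -- (i)
  have hFG : (∫ t in (0:ℝ)..(2*Real.pi), F t * (starRingEnd ℂ) (g t))
      = ((2*Real.pi : ℝ) : ℂ) * (S : ℂ) := by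
    have hpt : ∀ t : ℝ, F t * (starRingEnd ℂ) (g t)
        = ∑ m ∈ Finset.range N, (starRingEnd ℂ) (c m) * (F t * Complex.exp (-(m:ℂ) * (t * I))) := by
      intro t
      rw [hconjg, Finset.mul_sum]
      exact Finset.sum_congr rfl fun m _ => by ring
    rw [show (fun t : ℝ => F t * (starRingEnd ℂ) (g t)) = fun t : ℝ =>
      ∑ m ∈ Finset.range N, (starRingEnd ℂ) (c m) * (F t * Complex.exp (-(m:ℂ) * (t * I)))
      from funext hpt]
    rw [intervalIntegral.integral_finset_sum (f := fun m t =>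
      (starRingEnd ℂ) (c m) * (F t * Complex.exp (-(m:ℂ) * (t * I)))) (fun m _ =>
      ((continuous_const.mul (hFc.mul (by
        simpa using hec (-(m:ℂ))))).intervalIntegrable _ _))]
    have : ∀ m ∈ Finset.range N,
        (∫ t in (0:ℝ)..(2*Real.pi), (starRingEnd ℂ) (c m) * (F t * Complex.exp (-(m:ℂ) * (t * I))))
        = ((2*Real.pi : ℝ) : ℂ) * ((starRingEnd ℂ) (c m) * c m) := by
      intro m _
      rw [intervalIntegral.integral_const_mul, coeff_formula hf.differentiableOn h0 h1 m]
      ring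
    rw [Finset.sum_congr rfl this, ← Finset.mul_sum]
    congr 1
    rw [hS]
    push_cast
    refine Finset.sum_congr rfl fun m _ => ?_
    rw [mul_comm, Complex.mul_conj]
  -- (ii)
  have hGG : (∫ t in (0:ℝ)..(2*Real.pi), g t * (starRingEnd ℂ) (g t))
      = ((2*Real.pi : ℝ) : ℂ) * (S : ℂ) := by
    have hpt : ∀ t : ℝ, g t * (starRingEnd ℂ) (g t)
        = ∑ m ∈ Finset.range N, ∑ k ∈ Finset.range N,
            (c m * (starRingEnd ℂ) (c k)) * Complex.exp ((((m:ℤ) - (k:ℤ) : ℤ) : ℂ) * (t * I)) := by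
      intro t
      rw [hconjg, hg, Finset.sum_mul_sum]
      refine Finset.sum_congr rfl fun m _ => Finset.sum_congr rfl fun k _ => ?_
      rw [mul_mul_mul_comm, ← Complex.exp_add]
      congr 1
      push_cast
      ring
    rw [show (fun t : ℝ => g t * (starRingEnd ℂ) (g t)) = fun t : ℝ =>
      ∑ m ∈ Finset.range N, ∑ k ∈ Finset.range N,
        (c m * (starRingEnd ℂ) (c k)) * Complex.exp ((((m:ℤ) - (k:ℤ) : ℤ) : ℂ) * (t * I))
      from funext hpt]
    rw [intervalIntegral.integral_finset_sum (f := fun m t => ∑ k ∈ Finset.range N,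
      (c m * (starRingEnd ℂ) (c k)) * Complex.exp ((((m:ℤ) - (k:ℤ) : ℤ) : ℂ) * (t * I))) (fun m _ =>
      (continuous_finset_sum _ fun k _ => continuous_const.mul (hec _)).intervalIntegrable _ _)]
    have hinner : ∀ m ∈ Finset.range N,
        (∫ t in (0:ℝ)..(2*Real.pi), ∑ k ∈ Finset.range N,
          (c m * (starRingEnd ℂ) (c k)) * Complex.exp ((((m:ℤ) - (k:ℤ) : ℤ) : ℂ) * (t * I)))
        = ((2*Real.pi : ℝ) : ℂ) * ((starRingEnd ℂ) (c m) * c m) := by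
      intro m hm
      rw [intervalIntegral.integral_finset_sum (f := fun k t =>
        (c m * (starRingEnd ℂ) (c k)) * Complex.exp ((((m:ℤ) - (k:ℤ) : ℤ) : ℂ) * (t * I))) (fun k _ =>
        (continuous_const.mul (hec _)).intervalIntegrable _ _)]
      have heach : ∀ k ∈ Finset.range N,
          (∫ t in (0:ℝ)..(2*Real.pi),
            (c m * (starRingEnd ℂ) (c k)) * Complex.exp ((((m:ℤ) - (k:ℤ) : ℤ) : ℂ) * (t * I)))
          = if k = m then ((2*Real.pi : ℝ) : ℂ) * ((starRingEnd ℂ) (c m) * c m) else 0 := by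
        intro k _
        rw [intervalIntegral.integral_const_mul, orth]
        rcases eq_or_ne k m with hkm | hkm
        · subst hkm
          simp
          ring
        · rw [if_neg (by omega), if_neg hkm, mul_zero]
      rw [Finset.sum_congr rfl heach, Finset.sum_ite_eq' (Finset.range N) m, if_pos hm]
    rw [Finset.sum_congr rfl hinner, ← Finset.mul_sum]
    congr 1
    rw [hS]
    push_cast
    refine Finset.sum_congr rfl fun m _ => ?_
    rw [mul_comm, Complex.mul_conj]
  -- pointwise expansion
  have key : ∀ x y : ℂ, ‖x - y‖^2 = ‖x‖^2 - 2*(x * (starRingEnd ℂ) y).re + (y * (starRingEnd ℂ) y).re := by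
    intro x y
    have h2 : ∀ z : ℂ, ‖z‖^2 = Complex.normSq z := fun z => by
      rw [Complex.normSq_eq_norm_sq]
    rw [h2, h2, Complex.normSq_sub, Complex.mul_conj, Complex.ofReal_re]
    ring
  -- re commutes with integral
  have hre : ∀ h : ℝ → ℂ, Continuous h →
      (∫ t in (0:ℝ)..(2*Real.pi), (h t).re) = (∫ t in (0:ℝ)..(2*Real.pi), h t).re := by
    intro h hcont
    have := Complex.reCLM.intervalIntegral_comp_comm (hcont.intervalIntegrable (μ := volume) 0 (2*Real.pi))
    simpa using this
  -- nonnegativity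
  have hnn : (0:ℝ) ≤ ∫ t in (0:ℝ)..(2*Real.pi), ‖F t - g t‖^2 :=
    intervalIntegral.integral_nonneg (by positivity) (fun t _ => by positivity)
  have hsplit : (∫ t in (0:ℝ)..(2*Real.pi), ‖F t - g t‖^2)
      = (∫ t in (0:ℝ)..(2*Real.pi), ‖F t‖^2)
        - 2*((∫ t in (0:ℝ)..(2*Real.pi), F t * (starRingEnd ℂ) (g t)).re)
        + ((∫ t in (0:ℝ)..(2*Real.pi), g t * (starRingEnd ℂ) (g t)).re) := by
    have e1 : (fun t : ℝ => ‖F t - g t‖^2) = fun t : ℝ =>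
        ‖F t‖^2 - 2*((F t * (starRingEnd ℂ) (g t)).re) + ((g t * (starRingEnd ℂ) (g t)).re) :=
      funext fun t => key (F t) (g t)
    rw [e1]
    have c1 : Continuous fun t : ℝ => ‖F t‖^2 := (hFc.norm).pow 2
    have c2 : Continuous fun t : ℝ => 2*((F t * (starRingEnd ℂ) (g t)).re) :=
      continuous_const.mul (Complex.continuous_re.comp (hFc.mul hgcc))
    have c3 : Continuous fun t : ℝ => ((g t * (starRingEnd ℂ) (g t)).re) :=
      Complex.continuous_re.comp (hgc.mul hgcc)
    rw [intervalIntegral.integral_add (f := fun t : ℝ => ‖F t‖^2 - 2*((F t * (starRingEnd ℂ) (g t)).re))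
      (g := fun t : ℝ => ((g t * (starRingEnd ℂ) (g t)).re)) ((c1.sub c2).intervalIntegrable _ _) (c3.intervalIntegrable _ _),
      intervalIntegral.integral_sub (f := fun t : ℝ => ‖F t‖^2)
        (g := fun t : ℝ => 2*((F t * (starRingEnd ℂ) (g t)).re)) (c1.intervalIntegrable _ _) (c2.intervalIntegrable _ _)]
    congr 1
    congr 1
    · rw [show (fun t : ℝ => 2*((F t * (starRingEnd ℂ) (g t)).re)) =
        fun t : ℝ => (2:ℝ) * ((F t * (starRingEnd ℂ) (g t)).re) from rfl]
      rw [intervalIntegral.integral_const_mul, hre (fun t => F t * (starRingEnd ℂ) (g t)) (hFc.mul hgcc)]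
    · exact hre _ (hgc.mul hgcc)
  rw [hsplit, hFG, hGG] at hnn
  have hres : (((2*Real.pi : ℝ) : ℂ) * (S : ℂ)).re = 2*Real.pi*S := by
    rw [← Complex.ofReal_mul, Complex.ofReal_re]
  rw [hres] at hnn
  have hSfin : (2:ℝ)*Real.pi*S ≤ ∫ t in (0:ℝ)..(2*Real.pi), ‖F t‖^2 := by linarith
  exact hSfin

lemma forward_dir (p q : ℝ≥0∞) (hp : 2 ≤ p) (hq : 2 ≤ q) (l : ℕ → ℂ)
    (h : ∀ f, MemHardy p f → Memℓp (seqMul l (taylorCoeff f)) q) : Memℓp l ⊤ := by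
  classical
  by_contra hb
  rw [memℓp_infty_iff] at hb
  have Hc : ∀ C : ℝ, ∃ m, C < ‖l m‖ := by
    intro C
    obtain ⟨y, hy, hCy⟩ := not_bddAbove_iff.mp hb C
    obtain ⟨m, rfl⟩ := hy
    exact ⟨m, hCy⟩
  set n : ℕ → ℕ := fun k =>
    Nat.rec (Hc 1).choose (fun k prev => (Hc (max (4^(k+1)) ‖l prev‖)).choose) k with hn
  have hn0 : n 0 = (Hc 1).choose := rfl
  have hnsucc : ∀ k, n (k+1) = (Hc (max (4^(k+1)) ‖l (n k)‖)).choose := fun k => rfl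
  have hn4 : ∀ k, (4:ℝ)^k < ‖l (n k)‖ := by
    intro k
    cases k with
    | zero => simpa [hn0] using (Hc 1).choose_spec
    | succ k =>
      rw [hnsucc k]
      exact lt_of_le_of_lt (le_max_left _ _) (Hc _).choose_spec
  have hmono : ∀ k, ‖l (n k)‖ < ‖l (n (k+1))‖ := by
    intro k
    rw [hnsucc k]
    exact lt_of_le_of_lt (le_max_right _ _) (Hc _).choose_spec
  have hinj : Function.Injective n := by
    have hsm : StrictMono fun k => ‖l (n k)‖ := strictMono_nat_of_lt_succ hmono
    intro i j hij
    exact hsm.injective (by rw [hij])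
  set a : ℕ → ℂ := fun m => if hm : ∃ k, n k = m then ((1:ℂ)/2) ^ hm.choose else 0 with ha
  have ha_n : ∀ k, a (n k) = ((1:ℂ)/2)^k := by
    intro k
    have hm : ∃ j, n j = n k := ⟨k, rfl⟩
    have hch : hm.choose = k := hinj hm.choose_spec
    rw [ha]
    simp only
    rw [dif_pos hm, hch]
  have ha_norm_n : ∀ k, ‖a (n k)‖ = ((1:ℝ)/2)^k := by
    intro k
    rw [ha_n k]
    simp [norm_pow]
  have ha_supp : ∀ m, m ∉ Set.range n → a m = 0 := by
    intro m hm
    rw [ha]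
    simp only
    rw [dif_neg (by simpa [Set.mem_range] using hm)]
  have ha_norm_supp : ∀ m, m ∉ Set.range n → ‖a m‖ = 0 := fun m hm => by
    rw [ha_supp m hm, norm_zero]
  have hsum : Summable fun m => ‖a m‖ := by
    rw [← hinj.summable_iff ha_norm_supp]
    have : (fun m => ‖a m‖) ∘ n = fun k => ((1:ℝ)/2)^k := funext fun k => ha_norm_n k
    rw [this]
    exact summable_geometric_of_lt_one (by norm_num) (by norm_num)
  have htsum : (∑' m, ‖a m‖) = 2 := by
    rw [← hinj.tsum_eq (by
      intro m hm
      by_contra hmem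
      exact hm (ha_norm_supp m hmem))]
    have : (fun k => ‖a (n k)‖) = fun k => ((1:ℝ)/2)^k := funext fun k => ha_norm_n k
    rw [show ∑' (c : ℕ), ‖a (n c)‖ = ∑' (k : ℕ), ((1:ℝ)/2)^k from by rw [← this]]
    exact tsum_geometric_two
  have ha_le_one : ∀ m, ‖a m‖ ≤ 1 := by
    intro m
    by_cases hm : m ∈ Set.range n
    · obtain ⟨k, rfl⟩ := hm
      rw [ha_norm_n k]
      apply pow_le_one₀ (by norm_num) (by norm_num)
    · rw [ha_norm_supp m hm]; norm_num
  set P : FormalMultilinearSeries ℂ ℂ ℂ :=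
    fun m => ContinuousMultilinearMap.mkPiRing ℂ (Fin m) (a m) with hP
  have hPnorm : ∀ m, ‖P m‖ = ‖a m‖ := fun m => ContinuousMultilinearMap.norm_mkPiRing (a m)
  have hrad : 1 ≤ P.radius := by
    have := P.le_radius_of_bound 1 (r := 1) (fun m => by
      rw [hPnorm]
      simpa using ha_le_one m)
    simpa using this
  set f : ℂ → ℂ := P.sum with hf
  have hball : HasFPowerSeriesOnBall f P 0 1 :=
    (P.hasFPowerSeriesOnBall (lt_of_lt_of_le one_pos hrad)).mono one_pos hrad
  have hacoeff : taylorCoeff f = a := by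
    funext m
    rw [taylorCoeff_eq_coeff hball m, FormalMultilinearSeries.coeff, hP]
    simp
  have hanal : AnalyticOn ℂ f (Metric.ball 0 1) := by
    have h1 := hball.analyticOnNhd.analyticOn
    have h2 : Metric.eball (0:ℂ) 1 = Metric.ball (0:ℂ) 1 := by
      simpa using Metric.emetric_ball_nnreal (x := (0:ℂ)) (ε := 1)
    rwa [h2] at h1
  have hbound : ∀ z ∈ Metric.ball (0:ℂ) 1, ‖f z‖ ≤ 2 := by
    intro z hz
    rw [mem_ball_zero_iff] at hz
    have hterm : ∀ m : ℕ, ‖P m fun _ => z‖ ≤ ‖a m‖ := by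
      intro m
      rw [hP]
      simp only [ContinuousMultilinearMap.mkPiRing_apply]
      rw [norm_smul]
      calc ‖∏ _i : Fin m, z‖ * ‖a m‖ ≤ 1 * ‖a m‖ := by
            apply mul_le_mul_of_nonneg_right _ (norm_nonneg _)
            rw [Finset.prod_const]
            simp only [norm_pow, Finset.card_univ, Fintype.card_fin]
            exact pow_le_one₀ (norm_nonneg z) hz.le
        _ = ‖a m‖ := one_mul _
    have hsumz : Summable fun m => ‖P m fun _ => z‖ :=
      Summable.of_nonneg_of_le (fun m => norm_nonneg _) hterm hsum
    calc ‖f z‖ ≤ ∑' m, ‖P m fun _ => z‖ := norm_tsum_le_tsum_norm hsumz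
      _ ≤ ∑' m, ‖a m‖ := Summable.tsum_le_tsum hterm hsumz hsum
      _ = 2 := htsum
  have hp0 : p ≠ 0 := (lt_of_lt_of_le (by norm_num) hp).ne'
  have hH : MemHardy p f := memHardy_of_bounded hanal (by norm_num) hbound hp0
  have hmem := (h f hH).of_exponent_ge (le_top : q ≤ ⊤)
  obtain ⟨C, hC⟩ := hmem.bddAbove
  obtain ⟨k, hk⟩ := pow_unbounded_of_one_lt C (by norm_num : (1:ℝ) < 2)
  have hCk : ‖seqMul l (taylorCoeff f) (n k)‖ ≤ C := hC ⟨n k, rfl⟩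
  have hval : ‖seqMul l (taylorCoeff f) (n k)‖ = ‖l (n k)‖ * ((1:ℝ)/2)^k := by
    rw [seqMul, hacoeff]
    rw [norm_mul, ha_norm_n k]
  have h2k : (2:ℝ)^k < ‖l (n k)‖ * ((1:ℝ)/2)^k := by
    have h4 : (2:ℝ)^k = (4:ℝ)^k * ((1:ℝ)/2)^k := by
      rw [← mul_pow]; norm_num
    rw [h4]
    exact mul_lt_mul_of_pos_right (hn4 k) (by positivity)
  rw [hval] at hCk
  linarith

lemma reverse_dir (p q : ℝ≥0∞) (hp : 2 ≤ p) (hq : 2 ≤ q) (l : ℕ → ℂ) (hl : Memℓp l ⊤)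
    (f : ℂ → ℂ) (hfH : MemHardy p f) : Memℓp (seqMul l (taylorCoeff f)) q := by
  obtain ⟨hA, BddB⟩ := hfH
  obtain ⟨B, hB⟩ := BddB
  rw [mem_upperBounds] at hB
  have hBmean : ∀ r : ℝ, 0 ≤ r → r < 1 → hardyMean p f r ≤ B := fun r h0 h1 =>
    hB _ ⟨r, ⟨h0, h1⟩, rfl⟩
  set B' : ℝ := max B 0 with hB'
  have hB'0 : 0 ≤ B' := le_max_right _ _
  -- uniform bound on the L² circle integrals
  have hK : ∃ K : ℝ, ∀ r : ℝ, 0 < r → r < 1 →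
      (∫ t in (0:ℝ)..(2*Real.pi), ‖f ((r:ℂ) * Complex.exp (t * I))‖^2) ≤ K := by
    rcases eq_or_ne p ⊤ with hT | hT
    · refine ⟨2*Real.pi * B'^2, fun r h0 h1 => ?_⟩
      have hsup : ∀ t : ℝ, ‖f ((r:ℂ) * Complex.exp (t * I))‖ ≤ B' := by
        have hbdd : BddAbove (Set.range fun t : ℝ => ‖f ((r:ℂ) * Complex.exp (t * I))‖) := by
          obtain ⟨C', hC'⟩ := (isCompact_closedBall (0:ℂ) r).exists_bound_of_continuousOn
            (hA.continuousOn.mono (Metric.closedBall_subset_ball h1))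
          refine ⟨C', ?_⟩
          rintro x ⟨t, rfl⟩
          refine hC' _ ?_
          simp only [Metric.mem_closedBall, dist_zero_right, norm_mul,
            Complex.norm_exp_ofReal_mul_I, mul_one, Complex.norm_real, Real.norm_eq_abs, _root_.abs_of_nonneg h0.le,
            le_refl]
        intro t
        have h2 : ‖f ((r:ℂ) * Complex.exp (t * I))‖ ≤ circleSup f r := le_ciSup hbdd t
        have h3 : circleSup f r ≤ B := by
          have := hBmean r h0.le h1
          rw [hardyMean, if_pos hT] at this
          exact this
        exact le_trans h2 (le_trans h3 (le_max_left _ _))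
      have : (∫ t in (0:ℝ)..(2*Real.pi), ‖f ((r:ℂ) * Complex.exp (t * I))‖^2)
          ≤ ∫ _t in (0:ℝ)..(2*Real.pi), B'^2 := by
        apply intervalIntegral.integral_mono_on (by positivity)
          ((((circle_cont hA.continuousOn h0.le h1).norm).pow 2).intervalIntegrable _ _)
          intervalIntegrable_const
        intro t _
        exact pow_le_pow_left₀ (norm_nonneg _) (hsup t) 2
      simpa [mul_comm] using this
    · set pt : ℝ := p.toReal with hpt
      have hpt2 : (2:ℝ) ≤ pt := by
        rw [hpt, show (2:ℝ) = (2:ℝ≥0∞).toReal by simp]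
        exact (ENNReal.toReal_le_toReal (by simp) hT).mpr hp
      have hpt0 : 0 < pt := by linarith
      refine ⟨2*Real.pi * B'^pt + 2*Real.pi, fun r h0 h1 => ?_⟩
      have hFc : Continuous fun t : ℝ => f ((r:ℂ) * Complex.exp (t * I)) :=
        circle_cont hA.continuousOn h0.le h1
      have hmean := hBmean r h0.le h1
      rw [hardyMean, if_neg hT] at hmean
      rw [circleMean] at hmean
      set Ipt : ℝ := ∫ t in (0:ℝ)..(2*Real.pi), ‖f ((r:ℂ) * Complex.exp (t * I))‖ ^ pt with hIpt
      have hIpt0 : 0 ≤ Ipt :=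
        intervalIntegral.integral_nonneg (by positivity)
          (fun t _ => Real.rpow_nonneg (norm_nonneg _) _)
      have hx0 : 0 ≤ 1/(2*Real.pi) * Ipt := by positivity
      have hmean' : (1/(2*Real.pi) * Ipt) ^ (1/pt) ≤ B' :=
        le_trans hmean (le_max_left _ _)
      have hIle : Ipt ≤ 2*Real.pi * B'^pt := by
        have h2 : ((1/(2*Real.pi) * Ipt) ^ (1/pt)) ^ pt ≤ B' ^ pt :=
          Real.rpow_le_rpow (Real.rpow_nonneg hx0 _) hmean' hpt0.le
        rw [← Real.rpow_mul hx0, one_div_mul_cancel hpt0.ne', Real.rpow_one] at h2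
        have hpi : 0 < 2*Real.pi := by positivity
        calc Ipt = 2*Real.pi * (1/(2*Real.pi) * Ipt) := by field_simp
          _ ≤ 2*Real.pi * B'^pt := by
              apply mul_le_mul_of_nonneg_left h2 hpi.le
      have hptwise : ∀ t : ℝ, ‖f ((r:ℂ) * Complex.exp (t * I))‖^2
          ≤ ‖f ((r:ℂ) * Complex.exp (t * I))‖ ^ pt + 1 := by
        intro t
        set x : ℝ := ‖f ((r:ℂ) * Complex.exp (t * I))‖ with hx
        have hx0' : 0 ≤ x := norm_nonneg _
        rcases le_or_gt x 1 with hx1 | hx1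
        · have : x^2 ≤ 1 := pow_le_one₀ hx0' hx1
          have h2 : 0 ≤ x ^ pt := Real.rpow_nonneg hx0' _
          linarith
        · have h2 : x^(2:ℝ) ≤ x ^ pt :=
            Real.rpow_le_rpow_of_exponent_le hx1.le hpt2
          rw [Real.rpow_two] at h2
          have h3 : 0 ≤ x ^ pt := Real.rpow_nonneg hx0' _
          linarith
      have hint2 : (∫ t in (0:ℝ)..(2*Real.pi), ‖f ((r:ℂ) * Complex.exp (t * I))‖^2)
          ≤ ∫ t in (0:ℝ)..(2*Real.pi), (‖f ((r:ℂ) * Complex.exp (t * I))‖ ^ pt + 1) := by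
        apply intervalIntegral.integral_mono_on (by positivity)
          (((hFc.norm).pow 2).intervalIntegrable _ _)
          ((((hFc.norm).rpow_const fun t => Or.inr hpt0.le).add continuous_const).intervalIntegrable _ _)
        intro t _
        exact hptwise t
      have hsplit : (∫ t in (0:ℝ)..(2*Real.pi), (‖f ((r:ℂ) * Complex.exp (t * I))‖ ^ pt + 1))
          = Ipt + 2*Real.pi := by
        rw [intervalIntegral.integral_add
          (((hFc.norm).rpow_const fun t => Or.inr hpt0.le).intervalIntegrable _ _)
          intervalIntegrable_const]
        simp [hIpt]
      rw [hsplit] at hint2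
      linarith
  obtain ⟨K, hKb⟩ := hK
  -- summability of squared Taylor coefficients
  have hsumc : Summable fun m => ‖taylorCoeff f m‖^2 := by
    have hpi : (0:ℝ) < 2*Real.pi := by positivity
    apply summable_of_sum_range_le (c := K/(2*Real.pi)) (fun m => by positivity)
    intro N
    set φ : ℝ → ℝ := fun r => ∑ m ∈ Finset.range N, Complex.normSq (taylorCoeff f m * (r:ℂ)^m)
      with hφ
    have hφc : Continuous φ := by
      apply continuous_finset_sum
      intro m _
      exact Complex.continuous_normSq.comp
        (continuous_const.mul ((Complex.continuous_ofReal).pow m))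
    have hφle : ∀ r : ℝ, 0 < r → r < 1 → φ r ≤ K/(2*Real.pi) := by
      intro r h0 h1
      have hb := bessel hA h0 h1 N
      have := le_trans hb (hKb r h0 h1)
      rw [le_div_iff₀ hpi]
      linarith
    have hu : Tendsto (fun k : ℕ => φ (1 - 1/(k+1))) atTop (𝓝 (φ 1)) := by
      have h1 : Tendsto (fun k : ℕ => 1 - 1/((k:ℝ)+1)) atTop (𝓝 1) := by
        have h0 := tendsto_one_div_add_atTop_nhds_zero_nat (𝕜 := ℝ)
        have h2 : Tendsto (fun k : ℕ => (1:ℝ) - 1/((k:ℝ)+1)) atTop (𝓝 (1 - 0)) :=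
          Tendsto.sub tendsto_const_nhds h0
        simpa using h2
      exact (hφc.tendsto 1).comp h1
    have hev : ∀ᶠ k : ℕ in atTop, φ (1 - 1/((k:ℝ)+1)) ≤ K/(2*Real.pi) := by
      filter_upwards [eventually_ge_atTop 1] with k hk
      have hk1 : (1:ℝ) ≤ (k:ℝ) := by exact_mod_cast hk
      have hpos : 0 < 1 - 1/((k:ℝ)+1) := by
        rw [sub_pos, div_lt_one (by linarith)]
        linarith
      have hlt : 1 - 1/((k:ℝ)+1) < 1 := by
        have : 0 < 1/((k:ℝ)+1) := by positivity
        linarith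
      exact hφle _ hpos hlt
    have hφ1 : φ 1 ≤ K/(2*Real.pi) := le_of_tendsto hu hev
    have hφ1eq : φ 1 = ∑ m ∈ Finset.range N, ‖taylorCoeff f m‖^2 := by
      rw [hφ]
      refine Finset.sum_congr rfl fun m _ => ?_
      rw [Complex.ofReal_one, one_pow, mul_one, Complex.normSq_eq_norm_sq]
    rw [← hφ1eq]
    exact hφ1
  -- multiply by the bounded sequence
  obtain ⟨C, hC⟩ := hl.bddAbove
  rw [mem_upperBounds] at hC
  have hCl : ∀ m, ‖l m‖ ≤ C := fun m => hC _ ⟨m, rfl⟩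
  have hC0 : 0 ≤ C := le_trans (norm_nonneg (l 0)) (hCl 0)
  have hsum2 : Summable fun m => ‖seqMul l (taylorCoeff f) m‖^2 := by
    have hle : ∀ m, ‖seqMul l (taylorCoeff f) m‖^2 ≤ C^2 * ‖taylorCoeff f m‖^2 := by
      intro m
      rw [seqMul, norm_mul, mul_pow]
      apply mul_le_mul_of_nonneg_right _ (by positivity)
      exact pow_le_pow_left₀ (norm_nonneg _) (hCl m) 2
    exact Summable.of_nonneg_of_le (fun m => by positivity) hle (hsumc.mul_left _)
  have hmem2 : Memℓp (seqMul l (taylorCoeff f)) 2 := by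
    apply memℓp_gen
    have h2 : ((2:ℝ≥0∞).toReal) = (2:ℝ) := by simp
    rw [h2]
    have : (fun m => ‖seqMul l (taylorCoeff f) m‖ ^ (2:ℝ)) =
        fun m => ‖seqMul l (taylorCoeff f) m‖^2 := by
      funext m
      rw [Real.rpow_two]
    rw [this]
    exact hsum2
  exact hmem2.of_exponent_ge hq

/-- For `2 ≤ p ≤ ∞` and `2 ≤ q ≤ ∞`, `M(H_p, ℓ_q) = ℓ_∞`. -/
theorem stmt_5 (p q : ℝ≥0∞) (hp : 2 ≤ p) (hq : 2 ≤ q) (l : ℕ → ℂ) :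
    (∀ f, MemHardy p f → Memℓp (seqMul l (taylorCoeff f)) q) ↔ Memℓp l ⊤ := by
  constructor
  · intro h
    exact forward_dir p q hp hq l h
  · intro hl f hf
    exact reverse_dir p q hp hq l hl f hf
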